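/- With F, G, I and H as defined, the set ℂ ∖ I is mapped into itself by F, the map H is a homeomorphism from ℂ ∖ I onto ℂ, and H(F(W)) = G(H(W)) = H(W) + 1 for every W ∈ ℂ ∖ I; that is, H conjugates the action of F on ℂ ∖ I to the action of G on ℂ. -/

import Mathlib

open Complex Set Metric Filter Topology


noncomputable def hmap (R a : ℝ) (W : ℂ) : ℂ :=
  (((Real.log (‖W - a‖) - Real.log a) / Real.log R : ℝ) : ℂ) -
  ((2 * a * Real.tan (Complex.arg ((a:ℂ) - W) / 2) : ℝ) : ℂ) * Complex.I

noncomputable def gmap (R a : ℝ) (z : ℂ) : ℂ :=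
  (a:ℂ) + ((Real.exp (Real.log a + z.re * Real.log R) : ℝ) : ℂ) *
    Complex.exp (((Real.pi - 2 * Real.arctan (z.im / (2*a)) : ℝ) : ℂ) * Complex.I)

-- basic slit facts
lemma slit_ne {a : ℝ} {W : ℂ} (h : W.im ≠ 0 ∨ W.re < a) : (a:ℂ) - W ≠ 0 := by
  intro h0
  have h1 : ((a:ℂ) - W).im = 0 := by rw [h0]; simp
  have h2 : ((a:ℂ) - W).re = 0 := by rw [h0]; simp
  simp at h1 h2
  rcases h with h | h
  · exact h h1
  · linarith
  
lemma slit_mem {a : ℝ} {W : ℂ} (h : W.im ≠ 0 ∨ W.re < a) : (a:ℂ) - W ∈ slitPlane := by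
  rw [Complex.mem_slitPlane_iff]
  rcases h with h | h
  · right; simpa using h
  · left; simp; linarith

lemma slit_arg_lt {a : ℝ} {W : ℂ} (h : W.im ≠ 0 ∨ W.re < a) :
    Complex.arg ((a:ℂ) - W) ∈ Ioo (-Real.pi) Real.pi := by
  have hm := Complex.arg_mem_Ioc ((a:ℂ) - W)
  constructor
  · exact hm.1
  · rcases lt_or_eq_of_le hm.2 with h' | h'
    · exact h'
    · exfalso
      rw [Complex.arg_eq_pi_iff] at h'
      simp at h'
      rcases h with h2 | h2
      · exact h2 h'.2
      · linarith [h'.1]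

lemma polar_decomp {a : ℝ} (W : ℂ) :
    (a:ℂ) + ((‖W - (a:ℂ)‖ : ℝ) : ℂ) *
      Complex.exp (((Real.pi + Complex.arg ((a:ℂ) - W) : ℝ) : ℂ) * Complex.I) = W := by
  have key : Complex.exp (((Real.pi + Complex.arg ((a:ℂ) - W) : ℝ) : ℂ) * Complex.I)
      = - Complex.exp ((Complex.arg ((a:ℂ) - W) : ℂ) * Complex.I) := by
    push_cast
    rw [add_mul, Complex.exp_add, Complex.exp_pi_mul_I]
    ring
  rw [key]
  have habs : ‖W - (a:ℂ)‖ = ‖(a:ℂ) - W‖ := by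
    rw [norm_sub_rev]
  rw [habs]
  have := Complex.norm_mul_exp_arg_mul_I ((a:ℂ) - W)
  rw [mul_neg, this]
  ring

lemma H_eq_hmap {R a : ℝ} {H : ℂ → ℂ}
    (hH : ∀ ρ t : ℝ, 0 < ρ → 0 < t → t < 2 * Real.pi →
      H ((a : ℂ) + (ρ : ℂ) * Complex.exp ((t : ℂ) * Complex.I)) =
        (((Real.log ρ - Real.log a) / Real.log R : ℝ) : ℂ) +
        ((2 * a * Real.tan ((Real.pi - t) / 2) : ℝ) : ℂ) * Complex.I)
    {W : ℂ} (h : W.im ≠ 0 ∨ W.re < a) : H W = hmap R a W := by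
  set θ := Complex.arg ((a:ℂ) - W) with hθ
  have hθIoo := slit_arg_lt h
  have hρ : 0 < ‖W - (a:ℂ)‖ := by
    rw [norm_pos_iff]
    intro h0
    apply slit_ne h
    have : (a:ℂ) - W = -(W - (a:ℂ)) := by ring
    rw [this, h0, neg_zero]
  have ht1 : 0 < Real.pi + θ := by linarith [hθIoo.1]
  have ht2 : Real.pi + θ < 2 * Real.pi := by linarith [hθIoo.2]
  have := hH (‖W - (a:ℂ)‖) (Real.pi + θ) hρ ht1 ht2
  rw [polar_decomp W] at this
  rw [this, hmap]
  have htan : (Real.pi - (Real.pi + θ)) / 2 = -(θ/2) := by ring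
  rw [htan, Real.tan_neg]
  push_cast
  ring

lemma sub_mulI_re (x y : ℝ) : ((x:ℂ) - (y:ℂ) * Complex.I).re = x := by
  simp only [Complex.sub_re, Complex.ofReal_re, Complex.mul_re, Complex.ofReal_im,
    Complex.I_re, Complex.I_im]
  ring

lemma sub_mulI_im (x y : ℝ) : ((x:ℂ) - (y:ℂ) * Complex.I).im = -y := by
  simp only [Complex.sub_im, Complex.ofReal_im, Complex.mul_im, Complex.ofReal_re,
    Complex.I_re, Complex.I_im]
  ring

lemma gmap_key {R a : ℝ} (z : ℂ) :
    (a:ℂ) - gmap R a z = ((Real.exp (Real.log a + z.re * Real.log R) : ℝ) : ℂ) *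
      Complex.exp (((-(2 * Real.arctan (z.im / (2*a))) : ℝ) : ℂ) * Complex.I) := by
  rw [gmap]
  have : Complex.exp (((Real.pi - 2 * Real.arctan (z.im / (2*a)) : ℝ) : ℂ) * Complex.I)
      = - Complex.exp (((-(2 * Real.arctan (z.im / (2*a))) : ℝ) : ℂ) * Complex.I) := by
    push_cast
    rw [sub_mul, Complex.exp_sub, Complex.exp_pi_mul_I, neg_mul, Complex.exp_neg]
    field_simp
  rw [this]
  ring

lemma gmap_slit {R a : ℝ} (ha : 0 < a) (z : ℂ) :
    (gmap R a z).im ≠ 0 ∨ (gmap R a z).re < a := by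
  have key := gmap_key (R := R) (a := a) z
  set r := Real.exp (Real.log a + z.re * Real.log R) with hr
  have hrpos : 0 < r := Real.exp_pos _
  set s := Real.arctan (z.im / (2*a)) with hs
  have hexp_im := Complex.exp_ofReal_mul_I_im (-(2 * s))
  have hexp_re := Complex.exp_ofReal_mul_I_re (-(2 * s))
  have hgim : (gmap R a z).im = r * Real.sin (2 * s) := by
    have h1 : (gmap R a z).im = -(((a:ℂ) - gmap R a z).im) := by simp
    rw [h1, key, Complex.mul_im, hexp_im, hexp_re]
    simp only [Complex.ofReal_re, Complex.ofReal_im, Real.sin_neg]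
    ring
  have hgre : (gmap R a z).re = a - r * Real.cos (2 * s) := by
    have h1 : (gmap R a z).re = a - (((a:ℂ) - gmap R a z).re) := by simp
    rw [h1, key, Complex.mul_re, hexp_im, hexp_re]
    simp only [Complex.ofReal_re, Complex.ofReal_im, Real.cos_neg]
    ring
  by_cases him : z.im = 0
  · right
    have hs0 : s = 0 := by rw [hs, him]; simp
    rw [hgre, hs0]
    simp
    linarith
  · left
    rw [hgim]
    have hsmem := Real.arctan_mem_Ioo (z.im / (2*a))
    rw [← hs] at hsmem
    have hsne : Real.sin (2 * s) ≠ 0 := by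
      intro hz
      rw [Real.sin_eq_zero_iff_of_lt_of_lt (by linarith [hsmem.1]) (by linarith [hsmem.2])] at hz
      have hs0 : s = 0 := by linarith
      rw [hs, Real.arctan_eq_zero_iff, div_eq_zero_iff] at hs0
      rcases hs0 with h' | h'
      · exact him h'
      · linarith
    exact mul_ne_zero (ne_of_gt hrpos) hsne

lemma hmap_gmap {R a : ℝ} (hR0 : 0 < R) (hR1 : R < 1) (ha : 0 < a) (z : ℂ) :
    hmap R a (gmap R a z) = z := by
  have hlogR : Real.log R < 0 := Real.log_neg hR0 hR1
  have key := gmap_key (R := R) (a := a) z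
  set r := Real.exp (Real.log a + z.re * Real.log R) with hr
  have hrpos : 0 < r := Real.exp_pos _
  set s := Real.arctan (z.im / (2*a)) with hs
  have hsmem := Real.arctan_mem_Ioo (z.im / (2*a))
  rw [← hs] at hsmem
  have habs : ‖gmap R a z - (a:ℂ)‖ = r := by
    have h1 : gmap R a z - (a:ℂ) = -((a:ℂ) - gmap R a z) := by ring
    rw [h1, norm_neg, key, norm_mul, Complex.norm_exp_ofReal_mul_I,
      Complex.norm_real, Real.norm_eq_abs, abs_of_pos hrpos, mul_one]
  have harg : Complex.arg ((a:ℂ) - gmap R a z) = -(2*s) := by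
    rw [key, Complex.exp_mul_I, Complex.arg_real_mul _ hrpos]
    exact Complex.arg_cos_add_sin_mul_I
      ⟨by linarith [hsmem.1, hsmem.2], by linarith [hsmem.1, hsmem.2]⟩
  rw [hmap, habs, harg]
  have hre : (Real.log r - Real.log a) / Real.log R = z.re := by
    rw [hr, Real.log_exp, add_sub_cancel_left, mul_div_assoc,
      div_self (ne_of_lt hlogR), mul_one]
  have him : 2 * a * Real.tan (-(2*s)/2) = -z.im := by
    have h2 : -(2*s)/2 = -s := by ring
    rw [h2, Real.tan_neg, hs, Real.tan_arctan]
    field_simp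
  rw [hre, him]
  push_cast
  rw [show (-(z.im):ℂ) * Complex.I = -(z.im * Complex.I) by ring]
  rw [sub_neg_eq_add, Complex.re_add_im]

lemma gmap_hmap {R a : ℝ} (hR0 : 0 < R) (hR1 : R < 1) (ha : 0 < a) {W : ℂ}
    (h : W.im ≠ 0 ∨ W.re < a) : gmap R a (hmap R a W) = W := by
  have hlogR : Real.log R < 0 := Real.log_neg hR0 hR1
  set θ := Complex.arg ((a:ℂ) - W) with hθ
  have hθIoo := slit_arg_lt h
  rw [← hθ] at hθIoo
  have hρ : 0 < ‖W - (a:ℂ)‖ := by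
    rw [norm_pos_iff]
    intro h0
    apply slit_ne h
    have : (a:ℂ) - W = -(W - (a:ℂ)) := by ring
    rw [this, h0, neg_zero]
  set ρ := ‖W - (a:ℂ)‖ with hρdef
  have hre : (hmap R a W).re = (Real.log ρ - Real.log a) / Real.log R :=
    sub_mulI_re _ _
  have him : (hmap R a W).im = -(2 * a * Real.tan (θ/2)) :=
    sub_mulI_im _ _
  rw [gmap, hre, him]
  have h1 : Real.exp (Real.log a + (Real.log ρ - Real.log a) / Real.log R * Real.log R) = ρ := by
    rw [div_mul_cancel₀ _ (ne_of_lt hlogR),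
      show Real.log a + (Real.log ρ - Real.log a) = Real.log ρ by ring]
    exact Real.exp_log hρ
  have h2 : Real.arctan (-(2 * a * Real.tan (θ/2)) / (2*a)) = -(θ/2) := by
    have h3 : -(2 * a * Real.tan (θ/2)) / (2*a) = -Real.tan (θ/2) := by
      field_simp
    rw [h3, ← Real.tan_neg]
    exact Real.arctan_tan (by linarith [hθIoo.2]) (by linarith [hθIoo.1])
  rw [h1, h2]
  rw [show Real.pi - 2 * -(θ/2) = Real.pi + θ by ring]
  exact polar_decomp W

lemma gmap_continuous (R a : ℝ) : Continuous (gmap R a) := by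
  unfold gmap
  apply continuous_const.add
  apply Continuous.mul
  · apply Complex.continuous_ofReal.comp
    apply Real.continuous_exp.comp
    fun_prop
  · apply Complex.continuous_exp.comp
    apply Continuous.mul _ continuous_const
    apply Complex.continuous_ofReal.comp
    apply Continuous.sub continuous_const
    exact (continuous_const.mul (Real.continuous_arctan.comp (by fun_prop)))

lemma hmap_continuousAt {R a : ℝ} {W : ℂ} (h : W.im ≠ 0 ∨ W.re < a) :
    ContinuousAt (hmap R a) W := by
  have hne : (a:ℂ) - W ≠ 0 := slit_ne h
  have hρ : ‖W - (a:ℂ)‖ ≠ 0 := by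
    intro h0
    apply hne
    rw [norm_eq_zero] at h0
    rw [show (a:ℂ) - W = -(W - (a:ℂ)) by ring, h0, neg_zero]
  have hθIoo := slit_arg_lt h
  have hsub : ContinuousAt (fun W : ℂ => (a:ℂ) - W) W := by fun_prop
  have harg : ContinuousAt (fun W : ℂ => Complex.arg ((a:ℂ) - W)) W :=
    (Complex.continuousAt_arg (slit_mem h)).comp hsub
  have hlog : ContinuousAt (fun W : ℂ => Real.log (‖W - (a:ℂ)‖)) W := by
    exact ContinuousAt.log (f := fun W : ℂ => ‖W - (a:ℂ)‖) ((continuous_norm.comp (continuous_id.sub continuous_const)).continuousAt) hρ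
  have hcos : Real.cos (Complex.arg ((a:ℂ) - W) / 2) ≠ 0 := by
    apply ne_of_gt
    apply Real.cos_pos_of_mem_Ioo
    constructor
    · linarith [hθIoo.1]
    · linarith [hθIoo.2]
  have htan : ContinuousAt (fun W : ℂ => Real.tan (Complex.arg ((a:ℂ) - W) / 2)) W :=
    ContinuousAt.comp (g := Real.tan) (f := fun W : ℂ => Complex.arg ((a:ℂ) - W) / 2)
      (Real.continuousAt_tan.mpr hcos) (harg.div_const 2)
  unfold hmap
  apply ContinuousAt.sub
  · exact Complex.continuous_ofReal.continuousAt.comp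
      ((hlog.sub continuousAt_const).div_const _)
  · apply ContinuousAt.mul _ continuousAt_const
    exact Complex.continuous_ofReal.continuousAt.comp (continuousAt_const.mul htan)

/-- Conjugacy on the fundamental model (Section 4, Step 1): with `0 < R < 1`,
`a = 1/(1−R)`, `F(W) = RW + 1`, `G(W) = W + 1`, `I = [a,∞) ⊂ ℝ ⊂ ℂ`, and
`H(a + ρ e^{it}) = (log ρ − log a)/log R + 2ai·tan((π−t)/2)` for `ρ > 0`, `0 < t < 2π`,
the set `ℂ ∖ I` is mapped into itself by `F`, `H` is a homeomorphism from `ℂ ∖ I` onto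
`ℂ`, and `H(F(W)) = G(H(W)) = H(W) + 1` on `ℂ ∖ I`. -/
theorem fundamental_model_conjugacy
    (R : ℝ) (hR0 : 0 < R) (hR1 : R < 1)
    (a : ℝ) (ha : a = 1 / (1 - R))
    (F G : ℂ → ℂ) (hF : ∀ W : ℂ, F W = (R : ℂ) * W + 1) (hG : ∀ W : ℂ, G W = W + 1)
    (I : Set ℂ) (hI : I = {w : ℂ | w.im = 0 ∧ a ≤ w.re})
    (H : ℂ → ℂ)
    (hH : ∀ ρ t : ℝ, 0 < ρ → 0 < t → t < 2 * Real.pi →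
      H ((a : ℂ) + (ρ : ℂ) * Complex.exp ((t : ℂ) * Complex.I)) =
        (((Real.log ρ - Real.log a) / Real.log R : ℝ) : ℂ) +
        ((2 * a * Real.tan ((Real.pi - t) / 2) : ℝ) : ℂ) * Complex.I) :
    MapsTo F Iᶜ Iᶜ ∧
    (∃ e : (Iᶜ : Set ℂ) ≃ₜ ℂ, ∀ w : (Iᶜ : Set ℂ), e w = H (w : ℂ)) ∧
    (∀ W ∈ Iᶜ, H (F W) = G (H W) ∧ G (H W) = H W + 1) := by
  have h1R : 0 < 1 - R := by linarith
  have hapos : 0 < a := by rw [ha]; positivity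
  have haR : a * R = a - 1 := by
    have h2 : a * (1 - R) = 1 := by rw [ha]; field_simp
    nlinarith
  have hmemIff : ∀ W : ℂ, W ∈ Iᶜ ↔ (W.im ≠ 0 ∨ W.re < a) := by
    intro W
    simp only [hI, mem_compl_iff, mem_setOf_eq]
    rw [not_and_or, not_le]
  have hmaps : Set.MapsTo F Iᶜ Iᶜ := by
    intro W hW
    rw [hmemIff] at hW ⊢
    rw [hF]
    rcases hW with h | h
    · left
      simp only [Complex.add_im, Complex.mul_im, Complex.ofReal_re, Complex.ofReal_im,
        Complex.one_im]
      intro hc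
      apply h
      have : R * W.im = 0 := by linarith
      rcases mul_eq_zero.mp this with h' | h'
      · exact absurd h' (ne_of_gt hR0)
      · exact h'
    · right
      simp only [Complex.add_re, Complex.mul_re, Complex.ofReal_re, Complex.ofReal_im,
        Complex.one_re]
      have := mul_lt_mul_of_pos_left h hR0
      nlinarith
  refine ⟨hmaps, ?_, ?_⟩
  · refine ⟨Homeomorph.mk
      (Equiv.mk (fun w => hmap R a (w : ℂ))
        (fun z => ⟨gmap R a z, (hmemIff _).mpr (gmap_slit hapos z)⟩)
        (fun w => Subtype.ext (gmap_hmap hR0 hR1 hapos ((hmemIff _).mp w.2)))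
        (fun z => hmap_gmap hR0 hR1 hapos z))
      ?_ ?_, ?_⟩
    · exact ContinuousOn.restrict
        (fun W hW => (hmap_continuousAt ((hmemIff W).mp hW)).continuousWithinAt)
    · exact (gmap_continuous R a).subtype_mk _
    · intro w
      exact (H_eq_hmap hH ((hmemIff _).mp w.2)).symm
  · intro W hW
    have hs : W.im ≠ 0 ∨ W.re < a := (hmemIff W).mp hW
    have hsF : (F W).im ≠ 0 ∨ (F W).re < a := (hmemIff _).mp (hmaps hW)
    have hρne : ‖W - (a:ℂ)‖ ≠ 0 := by
      intro h0
      apply slit_ne hs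
      rw [norm_eq_zero] at h0
      rw [show (a:ℂ) - W = -(W - (a:ℂ)) by ring, h0, neg_zero]
    have hlogRne : Real.log R ≠ 0 := (Real.log_neg hR0 hR1).ne
    have hkey : (a:ℂ) - F W = (R:ℂ) * ((a:ℂ) - W) := by
      rw [hF]
      have hc : ((a * R : ℝ) : ℂ) = ((a - 1 : ℝ) : ℂ) := by rw [haR]
      push_cast at hc
      linear_combination -hc
    have habsF : ‖F W - (a:ℂ)‖ = R * ‖W - (a:ℂ)‖ := by
      rw [show F W - (a:ℂ) = -((a:ℂ) - F W) by ring, norm_neg, hkey, norm_mul,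
        Complex.norm_real, Real.norm_eq_abs, abs_of_pos hR0,
        show (a:ℂ) - W = -(W - (a:ℂ)) by ring, norm_neg]
    have hargF : Complex.arg ((a:ℂ) - F W) = Complex.arg ((a:ℂ) - W) := by
      rw [hkey]
      exact Complex.arg_real_mul _ hR0
    have hmapF : hmap R a (F W) = hmap R a W + 1 := by
      rw [hmap, hmap, habsF, hargF, Real.log_mul (ne_of_gt hR0) hρne]
      rw [show (Real.log R + Real.log (‖W - (a:ℂ)‖) - Real.log a) / Real.log R
          = (Real.log (‖W - (a:ℂ)‖) - Real.log a) / Real.log R + 1 by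
        field_simp
        ring]
      push_cast
      ring
    rw [hG, H_eq_hmap hH hs, H_eq_hmap hH hsF, hmapF]
    exact ⟨rfl, rfl⟩
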